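/- In the category of groupoids, the pullback of a functor that is both an equivalence and an isofibration along any functor is again an equivalence (right properness of the canonical model structure on groupoids at the level of a single pullback square). -/

import Mathlib

open CategoryTheory

/-- A functor of groupoids is an isofibration if every isomorphism out of the image of an
object lifts to an isomorphism out of that object. -/
def IsIsofibration {E B : Type*} [Groupoid E] [Groupoid B] (p : E ⥤ B) : Prop :=
  ∀ (e : E) (b : B) (φ : p.obj e ≅ b),
    ∃ (e' : E) (ψ : e ≅ e') (h : p.obj e' = b), p.map ψ.hom ≫ eqToHom h = φ.hom

/-- The strict pullback `A ×_B E` of groupoids along `f : A ⥤ B` and `p : E ⥤ B`: the full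
subcategory of the comma category `Comma f p` on the objects whose comparison morphism is
an identity, i.e. pairs `(a, e)` with `f.obj a = p.obj e`. -/
def StrictPullback {A E B : Type*} [Groupoid A] [Groupoid E] [Groupoid B]
    (f : A ⥤ B) (p : E ⥤ B) : Type _ :=
  ObjectProperty.FullSubcategory (fun x : Comma f p => ∃ h : f.obj x.left = p.obj x.right, x.hom = eqToHom h)

instance {A E B : Type*} [Groupoid A] [Groupoid E] [Groupoid B] (f : A ⥤ B) (p : E ⥤ B) :
    Category (StrictPullback f p) :=
  ObjectProperty.FullSubcategory.category _

/-- Right properness of the canonical model structure on groupoids at the level of a single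
pullback square: if `p : E ⥤ B` is an isofibration and an equivalence, then for any
`f : A ⥤ B` the projection `A ×_B E ⥤ A` from the strict pullback is an equivalence. -/
theorem pullback_of_trivial_isofibration_is_equivalence
    {A E B : Type*} [Groupoid A] [Groupoid E] [Groupoid B]
    (f : A ⥤ B) (p : E ⥤ B) (hfib : IsIsofibration p) (heq : p.IsEquivalence) :
    (ObjectProperty.ι
        (fun x : Comma f p => ∃ h : f.obj x.left = p.obj x.right, x.hom = eqToHom h) ⋙
      Comma.fst f p).IsEquivalence := by

  set F := (ObjectProperty.ι
        (fun x : Comma f p => ∃ h : f.obj x.left = p.obj x.right, x.hom = eqToHom h) ⋙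
      Comma.fst f p) with hF
  have faithful : F.Faithful := by
    constructor
    intro x y g h hgh
    obtain ⟨hx, hx2⟩ := x.2
    obtain ⟨hy, hy2⟩ := y.2
    have wg := g.hom.w
    have wh := h.hom.w
    simp only [hx2, hy2] at wg wh
    have hleft : g.hom.left = h.hom.left := hgh
    have : p.map g.hom.right = p.map h.hom.right := by
      have : eqToHom hx ≫ p.map g.hom.right = eqToHom hx ≫ p.map h.hom.right := by
        rw [← wg, ← wh, hleft]
      exact (cancel_epi (eqToHom hx)).mp this
    have hright : g.hom.right = h.hom.right := p.map_injective this
    apply InducedCategory.hom_ext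
    apply CommaMorphism.ext <;> assumption
  have full : F.Full := by
    constructor
    intro x y u
    obtain ⟨hx, hx2⟩ := x.2
    obtain ⟨hy, hy2⟩ := y.2
    refine ⟨⟨⟨u, p.preimage (eqToHom hx.symm ≫ f.map u ≫ eqToHom hy), ?_⟩⟩, rfl⟩
    simp [hx2, hy2]
  have essSurj : F.EssSurj := by
    constructor
    intro a
    obtain ⟨e', ψ, h, -⟩ := hfib (p.objPreimage (f.obj a)) (f.obj a)
      (p.objObjPreimageIso (f.obj a))
    exact ⟨⟨⟨a, e', eqToHom h.symm⟩, h.symm, rfl⟩, ⟨Iso.refl a⟩⟩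
  exact { }
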